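/- arXiv:1607.04948 — 4 statements merged into one kernel-verified Lean document; each statement's English description precedes it below -/
import Mathlib

section
/- Let p be a prime. The number of integers x with 1 ≤ x ≤ p(p−1), p ∤ x, and x^x ≡ x (mod p) equals (p−1)·∑_{d | p−1} φ(d)/d. -/
lemma count_icc_modeq0 (n m c0 : ℕ) (hm : 0 < m) (hmn : m ∣ n)
    (hc1 : 1 ≤ c0) (hc2 : c0 ≤ m) :
    ((Finset.Icc 1 n).filter (fun x => x ≡ c0 [MOD m])).card = n / m := by
  rw [← Finset.card_range (n / m)]
  apply Finset.card_nbij' (fun x => (x - 1) / m) (fun k => m * k + c0)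
  · intro x hx
    simp only [Finset.mem_coe, Finset.mem_filter, Finset.mem_Icc] at hx
    simp only [Finset.mem_coe, Finset.mem_range]
    rw [Nat.div_lt_iff_lt_mul hm]
    have := Nat.div_mul_cancel hmn
    omega
  · intro k hk
    simp only [Finset.mem_coe, Finset.mem_range] at hk
    simp only [Finset.mem_coe, Finset.mem_filter, Finset.mem_Icc]
    refine ⟨⟨by omega, ?_⟩, ?_⟩
    · have h1 : m * k + m ≤ m * (n / m) := by
        have h2 : k + 1 ≤ n / m := hk
        calc m * k + m = m * (k+1) := by ring
        _ ≤ m * (n / m) := Nat.mul_le_mul_left m h2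
      have := Nat.mul_div_cancel' hmn
      omega
    · show (m * k + c0) % m = c0 % m
      simp [Nat.mul_add_mod]
  · intro x hx
    simp only [Finset.mem_coe, Finset.mem_filter, Finset.mem_Icc] at hx
    obtain ⟨⟨h1, h2⟩, h3⟩ := hx
    have key : (x - 1) % m = c0 - 1 := by
      have h4 : x - 1 ≡ c0 - 1 [MOD m] := by
        have h6 : (x - 1) + 1 ≡ (c0 - 1) + 1 [MOD m] := by
          rw [Nat.sub_add_cancel h1, Nat.sub_add_cancel hc1]; exact h3
        exact Nat.ModEq.add_right_cancel' 1 h6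
      have h5 : (c0 - 1) % m = c0 - 1 := Nat.mod_eq_of_lt (by omega)
      have h7 : (x-1) % m = (c0-1) % m := h4
      omega
    have := Nat.div_add_mod (x - 1) m
    beta_reduce
    omega
  · intro k hk
    have h : m * k + c0 - 1 = m * k + (c0 - 1) := by omega
    simp only [h]
    rw [Nat.mul_add_div hm, Nat.div_eq_of_lt (by omega)]
    omega

lemma count_icc_modeq (n m c : ℕ) (hm : 0 < m) (hmn : m ∣ n) :
    ((Finset.Icc 1 n).filter (fun x => x ≡ c [MOD m])).card = n / m := by
  set c0 := if c % m = 0 then m else c % m with hc0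
  have h1 : 1 ≤ c0 := by rw [hc0]; split <;> omega
  have h2 : c0 ≤ m := by have := Nat.mod_lt c hm; rw [hc0]; split <;> omega
  have h3 : c0 % m = c % m := by
    rw [hc0]; split
    · simp [Nat.mod_self, *]
    · exact Nat.mod_mod_of_dvd c dvd_rfl
  rw [← count_icc_modeq0 n m c0 hm hmn h1 h2]
  congr 1
  apply Finset.filter_congr
  intro x _
  show x ≡ c [MOD m] ↔ x ≡ c0 [MOD m]
  unfold Nat.ModEq
  rw [h3]

lemma fiber_count (p : ℕ) (hp : p.Prime) [Fact p.Prime]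
    (count_icc_modeq : ∀ (n m c : ℕ), 0 < m → m ∣ n →
      ((Finset.Icc 1 n).filter (fun x => x ≡ c [MOD m])).card = n / m)
    (a : ZMod p) (ha : a ≠ 0) :
    ((Finset.Icc 1 (p * (p-1))).filter
      (fun x => (¬ p ∣ x ∧ x ^ x ≡ x [MOD p]) ∧ ((x : ZMod p) = a))).card
      = (p - 1) / orderOf a := by
  have hp2 := hp.two_le
  set d := orderOf a with hd
  have hd_dvd : d ∣ p - 1 := ZMod.orderOf_dvd_card_sub_one ha
  have hd_pos : 0 < d := orderOf_pos_iff.mpr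
    (isOfFinOrder_iff_pow_eq_one.mpr ⟨p-1, by omega, ZMod.pow_card_sub_one_eq_one ha⟩)
  have hcop : Nat.Coprime p d := by
    have h1 : Nat.Coprime p (p-1) := by
      rw [show p = (p-1)+1 by omega]; simp
    exact Nat.Coprime.coprime_dvd_right hd_dvd h1
  obtain ⟨c, hc1, hc2⟩ := Nat.chineseRemainder hcop a.val 1
  have key : ∀ x ∈ Finset.Icc 1 (p*(p-1)),
      ((¬ p ∣ x ∧ x ^ x ≡ x [MOD p]) ∧ ((x : ZMod p) = a)) ↔ x ≡ c [MOD p * d] := by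
    intro x hx
    simp only [Finset.mem_Icc] at hx
    rw [← Nat.modEq_and_modEq_iff_modEq_mul hcop]
    constructor
    · rintro ⟨⟨hnd, hmod⟩, hxa⟩
      constructor
      · have h0 : (x : ZMod p) = (a.val : ZMod p) := by rw [hxa, ZMod.natCast_rightInverse a]
        have hx_aval : x ≡ a.val [MOD p] := (ZMod.natCast_eq_natCast_iff _ _ _).mp h0
        exact hx_aval.trans hc1.symm
      · have hax : a ^ x = a := by
          have h0 : ((x ^ x : ℕ) : ZMod p) = ((x:ℕ) : ZMod p) :=
            (ZMod.natCast_eq_natCast_iff _ _ _).mpr hmod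
          push_cast at h0
          rw [hxa] at h0
          exact h0
        have h1 : a ^ (x - 1) = 1 := by
          have h5 : a ^ (x-1) * a = 1 * a := by
            rw [one_mul, ← pow_succ, show x - 1 + 1 = x by omega]
            exact hax
          exact mul_right_cancel₀ ha h5
        have h2 : d ∣ x - 1 := orderOf_dvd_iff_pow_eq_one.mpr h1
        have h3 : 1 ≡ x [MOD d] := (Nat.modEq_iff_dvd' (by omega)).mpr h2
        exact h3.symm.trans hc2.symm
    · rintro ⟨hxp, hxd⟩
      have hxa : (x : ZMod p) = a := by
        have h1 : x ≡ a.val [MOD p] := hxp.trans hc1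
        have h2 := (ZMod.natCast_eq_natCast_iff x a.val p).mpr h1
        rwa [ZMod.natCast_rightInverse a] at h2
      have hnd : ¬ p ∣ x := by
        intro hdvd
        exact ha (hxa ▸ (ZMod.natCast_eq_zero_iff x p).mpr hdvd)
      refine ⟨⟨hnd, ?_⟩, hxa⟩
      have hx1 : x ≡ 1 [MOD d] := hxd.trans hc2
      have h2 : d ∣ x - 1 := (Nat.modEq_iff_dvd' (by omega)).mp hx1.symm
      have h1 : a ^ (x-1) = 1 := orderOf_dvd_iff_pow_eq_one.mp h2
      have hax : a ^ x = a := by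
        rw [show x = x - 1 + 1 by omega, pow_succ, h1, one_mul]
      rw [← ZMod.natCast_eq_natCast_iff]
      push_cast
      rw [hxa, hax]
  rw [Finset.filter_congr key,
    count_icc_modeq _ _ _ (by positivity) (mul_dvd_mul_left p hd_dvd),
    Nat.mul_div_mul_left _ _ (by omega)]

theorem stmt1 (p : ℕ) (hp : p.Prime) :
    (Set.ncard {x : ℕ | 1 ≤ x ∧ x ≤ p * (p - 1) ∧ ¬ p ∣ x ∧ x ^ x ≡ x [MOD p]} : ℚ)
      = (p - 1 : ℚ) * ∑ d ∈ (p - 1).divisors, (Nat.totient d : ℚ) / d := by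
  haveI := Fact.mk hp
  have hp2 := hp.two_le
  have main : Set.ncard {x : ℕ | 1 ≤ x ∧ x ≤ p * (p - 1) ∧ ¬ p ∣ x ∧ x ^ x ≡ x [MOD p]}
      = ∑ d ∈ (p - 1).divisors, Nat.totient d * ((p - 1) / d) := by
    have hset : {x : ℕ | 1 ≤ x ∧ x ≤ p*(p-1) ∧ ¬ p ∣ x ∧ x ^ x ≡ x [MOD p]}
        = ↑((Finset.Icc 1 (p*(p-1))).filter (fun x => ¬ p ∣ x ∧ x ^ x ≡ x [MOD p])) := by
      ext x
      simp [Finset.mem_filter, Finset.mem_Icc, and_assoc]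
    rw [hset, Set.ncard_coe_finset]
    have hmaps : ∀ x ∈ (Finset.Icc 1 (p*(p-1))).filter (fun x => ¬ p ∣ x ∧ x ^ x ≡ x [MOD p]),
        ((x : ZMod p)) ∈ Finset.univ.filter (fun a : ZMod p => a ≠ 0) := by
      intro x hx
      simp only [Finset.mem_filter, Finset.mem_univ, true_and] at hx ⊢
      intro h0
      exact hx.2.1 ((ZMod.natCast_eq_zero_iff x p).mp h0)
    rw [Finset.card_eq_sum_card_fiberwise hmaps]
    have step1 : ∀ a ∈ Finset.univ.filter (fun a : ZMod p => a ≠ 0),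
        (((Finset.Icc 1 (p*(p-1))).filter (fun x => ¬ p ∣ x ∧ x ^ x ≡ x [MOD p])).filter
          (fun (x : ℕ) => (x : ZMod p) = a)).card = (p-1)/orderOf a := by
      intro a ha
      simp only [Finset.mem_filter, Finset.mem_univ, true_and] at ha
      rw [Finset.filter_filter]
      exact fiber_count p hp count_icc_modeq a ha
    rw [Finset.sum_congr rfl step1]
    have hsum_units : ∑ a ∈ Finset.univ.filter (fun a : ZMod p => a ≠ 0), (p-1)/orderOf a
        = ∑ u : (ZMod p)ˣ, (p-1)/orderOf u := by
      symm
      apply Finset.sum_bij (fun (u : (ZMod p)ˣ) _ => (u : ZMod p))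
      · intro u _
        simp [Units.ne_zero]
      · intro u1 _ u2 _ h
        exact Units.ext h
      · intro a ha
        simp only [Finset.mem_filter, Finset.mem_univ, true_and] at ha
        exact ⟨Units.mk0 a ha, Finset.mem_univ _, rfl⟩
      · intro u _
        rw [orderOf_units]
    rw [hsum_units]
    have hcardu : Fintype.card (ZMod p)ˣ = p - 1 := by
      rw [ZMod.card_units_eq_totient, Nat.totient_prime hp]
    have hmaps2 : ∀ u ∈ (Finset.univ : Finset (ZMod p)ˣ), orderOf u ∈ (p-1).divisors := by
      intro u _
      rw [Nat.mem_divisors]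
      exact ⟨hcardu ▸ orderOf_dvd_card, by omega⟩
    rw [← Finset.sum_fiberwise_of_maps_to hmaps2 (fun u => (p-1)/orderOf u)]
    apply Finset.sum_congr rfl
    intro d hd
    have hdvd := (Nat.mem_divisors.mp hd).1
    have hinner : ∀ u ∈ (Finset.univ : Finset (ZMod p)ˣ).filter (fun u => orderOf u = d),
        (p-1)/orderOf u = (p-1)/d := by
      intro u hu
      rw [(Finset.mem_filter.mp hu).2]
    rw [Finset.sum_congr rfl hinner, Finset.sum_const, smul_eq_mul,
      IsCyclic.card_orderOf_eq_totient (hcardu ▸ hdvd)]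
  rw [main, Nat.cast_sum, Finset.mul_sum]
  apply Finset.sum_congr rfl
  intro d hd
  obtain ⟨hdvd, hne⟩ := Nat.mem_divisors.mp hd
  have hd0 : d ≠ 0 := by rintro rfl; exact hne (zero_dvd_iff.mp hdvd)
  rw [Nat.cast_mul, Nat.cast_div hdvd (by exact_mod_cast hd0)]
  have hps : ((p - 1 : ℕ) : ℚ) = (p : ℚ) - 1 := by
    rw [Nat.cast_sub (by omega)]; norm_num
  rw [hps]
  ring
end

section
/- Let q be a prime and k a positive integer with k < (log q)/(10 log log q). Then integers n₁,…,n_k ∈ {2,…,q−1} are multiplicatively independent if and only if the corresponding linear forms ℒ_{n₁},…,ℒ_{n_k} over 𝔽_q are linearly independent, where ℒ_n(v) = ∑_i μ_i(n) v_i with μ_i(n) the exponent of the i-th prime p_i < q in the factorization of n. -/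
/-- The linear form `ℒ_n : 𝔽_q^d → 𝔽_q`, `d = π(q-1)`, with coefficients the exponents
`μ_i(n)` of the `i`-th prime in the factorization of `n`. -/
noncomputable def L (q n : ℕ) (v : Fin (Nat.primeCounting (q - 1)) → ZMod q) : ZMod q :=
  ∑ i : Fin (Nat.primeCounting (q - 1)),
    ((n.factorization (Nat.nth Nat.Prime (i : ℕ)) : ℕ) : ZMod q) * v i

open Finset in
lemma two_pow_bigOm_le {n : ℕ} (hn : n ≠ 0) :
    2 ^ (n.factorization.sum fun _ e => e) ≤ n := by
  calc 2 ^ (n.factorization.sum fun _ e => e)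
      = ∏ p ∈ n.factorization.support, 2 ^ n.factorization p := by
        rw [Finsupp.sum, Finset.prod_pow_eq_pow_sum]
    _ ≤ ∏ p ∈ n.factorization.support, p ^ n.factorization p := by
        refine Finset.prod_le_prod' fun p hp => Nat.pow_le_pow_left ?_ _
        exact (Nat.prime_of_mem_primeFactors (by simpa using hp)).two_le
    _ = n := Nat.factorization_prod_pow_eq_self hn

lemma sum_fin_factorization_le (d n : ℕ) :
    ∑ i : Fin d, n.factorization (Nat.nth Nat.Prime i) ≤ n.factorization.sum fun _ e => e := by
  classical
  rw [Finsupp.sum]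
  have hinj : ∀ a ∈ Finset.univ, ∀ b ∈ Finset.univ,
      Nat.nth Nat.Prime ((a : Fin d) : ℕ) = Nat.nth Nat.Prime ((b : Fin d) : ℕ) → a = b := by
    intro a _ b _ h
    exact Fin.ext (Nat.nth_injective Nat.infinite_setOf_prime h)
  rw [show (∑ i : Fin d, n.factorization (Nat.nth Nat.Prime i)) = ∑ p ∈ Finset.image (fun i : Fin d => Nat.nth Nat.Prime (i : ℕ)) Finset.univ, n.factorization p from (Finset.sum_image hinj).symm]
  set s := Finset.image (fun i : Fin d => Nat.nth Nat.Prime (i : ℕ)) Finset.univ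
  have h1 : ∑ p ∈ s, n.factorization p = ∑ p ∈ s ∩ n.factorization.support, n.factorization p := by
    refine (Finset.sum_subset Finset.inter_subset_left fun x hx hx' => ?_).symm
    by_contra h
    exact hx' (Finset.mem_inter.mpr ⟨hx, Finsupp.mem_support_iff.mpr h⟩)
  rw [h1]
  exact Finset.sum_le_sum_of_subset Finset.inter_subset_right

lemma prod_zpow_eq_one_iff {k : ℕ} (n : Fin k → ℕ) (hn : ∀ j, n j ≠ 0) (α : Fin k → ℤ) :
    ∏ j, ((n j : ℚ) ^ (α j)) = 1 ↔
      ∀ p : ℕ, p.Prime → ∑ j, α j * ((n j).factorization p : ℤ) = 0 := by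
  classical
  set a : Fin k → ℕ := fun j => (α j).toNat with ha
  set b : Fin k → ℕ := fun j => (-(α j)).toNat with hb
  have hab : ∀ j, α j = (a j : ℤ) - (b j : ℤ) :=
    fun j => by show α j = ((α j).toNat : ℤ) - (((-(α j)).toNat : ℤ)); omega
  have hnq : ∀ j, (n j : ℚ) ≠ 0 := fun j => Nat.cast_ne_zero.mpr (hn j)
  set A : ℕ := ∏ j, n j ^ a j with hA
  set B : ℕ := ∏ j, n j ^ b j with hB
  have hA0 : A ≠ 0 := Finset.prod_ne_zero_iff.mpr fun j _ => pow_ne_zero _ (hn j)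
  have hB0 : B ≠ 0 := Finset.prod_ne_zero_iff.mpr fun j _ => pow_ne_zero _ (hn j)
  have hsplit : ∏ j, ((n j : ℚ) ^ (α j)) = (A : ℚ) / (B : ℚ) := by
    rw [hA, hB]
    push_cast
    rw [← Finset.prod_div_distrib]
    refine Finset.prod_congr rfl fun j _ => ?_
    rw [hab j, zpow_sub₀ (hnq j), zpow_natCast, zpow_natCast]
  have hfacA : ∀ p : ℕ, A.factorization p = ∑ j, a j * (n j).factorization p := by
    intro p
    rw [hA, Nat.factorization_prod fun j _ => pow_ne_zero _ (hn j)]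
    simp [Nat.factorization_pow, Finset.sum_apply']
  have hfacB : ∀ p : ℕ, B.factorization p = ∑ j, b j * (n j).factorization p := by
    intro p
    rw [hB, Nat.factorization_prod fun j _ => pow_ne_zero _ (hn j)]
    simp [Nat.factorization_pow, Finset.sum_apply']
  rw [hsplit, div_eq_one_iff_eq (Nat.cast_ne_zero.mpr hB0), Nat.cast_inj]
  constructor
  · intro hABeq p hp
    have := congrArg (fun m => (Nat.factorization m) p) hABeq
    simp only [hfacA, hfacB] at this
    have : (∑ j, (a j : ℤ) * (n j).factorization p) = ∑ j, (b j : ℤ) * (n j).factorization p := by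
      exact_mod_cast congrArg (fun x : ℕ => (x : ℤ)) this
    calc ∑ j, α j * ((n j).factorization p : ℤ)
        = (∑ j, (a j : ℤ) * (n j).factorization p) - ∑ j, (b j : ℤ) * (n j).factorization p := by
          rw [← Finset.sum_sub_distrib]
          exact Finset.sum_congr rfl fun j _ => by rw [hab j]; ring
      _ = 0 := by rw [this, sub_self]
  · intro hsum
    refine Nat.eq_of_factorization_eq hA0 hB0 fun p => ?_
    by_cases hp : p.Prime
    · have h0 := hsum p hp
      have : (∑ j, (a j : ℤ) * (n j).factorization p) - (∑ j, (b j : ℤ) * (n j).factorization p) = 0 := by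
        rw [← Finset.sum_sub_distrib, ← h0]
        exact Finset.sum_congr rfl fun j _ => by rw [hab j]; ring
      have : (A.factorization p : ℤ) = (B.factorization p : ℤ) := by
        rw [hfacA, hfacB]; push_cast; linarith [sub_eq_zero.mp this]
      exact_mod_cast this
    · rw [Nat.factorization_eq_zero_of_not_prime _ hp, Nat.factorization_eq_zero_of_not_prime _ hp]

lemma det_abs_lt {k q : ℕ} (G : Matrix (Fin k) (Fin k) ℤ) {E : ℝ}
    (hE : ∀ j l, |((G j l : ℤ) : ℝ)| ≤ E)
    (hlt : (k.factorial : ℝ) * E ^ k < q) : |G.det| < (q : ℤ) := by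
  have h1 : |((G.det : ℤ) : ℝ)| ≤ (k.factorial : ℝ) * E ^ k := by
    have h2 := Matrix.det_le (A := G.map (Int.cast : ℤ → ℝ)) (abv := .abs) (x := E)
      (fun i j => hE i j)
    have h3 : ((G.det : ℤ) : ℝ) = (G.map (Int.cast : ℤ → ℝ)).det := by
      have := RingHom.map_det (Int.castRingHom ℝ) G
      rw [RingHom.mapMatrix_apply] at this
      exact this
    rw [h3]
    simpa [nsmul_eq_mul] using h2
  have : |((G.det : ℤ) : ℝ)| < (q : ℝ) := lt_of_le_of_lt h1 hlt
  rw [← Int.cast_abs] at this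
  exact_mod_cast this

open Real in
lemma ineq_caseB (k : ℕ) (L : ℝ) (hk : 1 ≤ (k : ℝ)) (hL : 1.3 ≤ L)
    (hksmall : (k : ℝ) < L / (10 * Real.log L)) :
    (k.factorial : ℝ) * (4 * L ^ 2) ^ k < Real.exp L := by
  have hL0 : (0 : ℝ) < L := by linarith
  have hlogL : 3 / 13 ≤ Real.log L := by
    have h1 := Real.one_sub_inv_le_log_of_pos hL0
    have h2 : L⁻¹ ≤ (1.3 : ℝ)⁻¹ := by
      apply inv_anti₀ (by norm_num) hL
    have : (1 : ℝ) - (1.3)⁻¹ ≤ 1 - L⁻¹ := by linarith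
    norm_num at this
    linarith
  have hlogL0 : (0 : ℝ) < Real.log L := by linarith
  have hkL : (k : ℝ) * Real.log L < L / 10 := by
    rw [div_mul_eq_div_div] at hksmall
    have := (lt_div_iff₀ hlogL0).mp hksmall
    linarith
  have hkLe : (k : ℝ) < 13 / 30 * L := by nlinarith
  have hk0 : (0 : ℝ) < k := by linarith
  have hkleL : (k : ℝ) ≤ L := by nlinarith
  have hlogk : Real.log k ≤ Real.log L := Real.log_le_log hk0 hkleL
  have hlogk0 : 0 ≤ Real.log k := Real.log_nonneg hk
  set X : ℝ := 4 * (k : ℝ) * L ^ 2 with hX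
  have hX1 : (1 : ℝ) < X := by nlinarith
  have hX0 : (0 : ℝ) < X := by linarith
  have hlogX : Real.log X = Real.log 4 + Real.log k + 2 * Real.log L := by
    rw [hX, Real.log_mul (by positivity) (by positivity), Real.log_mul (by norm_num) (by positivity),
      Real.log_pow]
    push_cast
    ring
  have hlog4 : Real.log 4 ≤ 2 * 0.6931471808 := by
    rw [show (4 : ℝ) = 2 ^ 2 by norm_num, Real.log_pow]
    push_cast
    nlinarith [Real.log_two_lt_d9]
  have hklog4 : (k : ℝ) * Real.log 4 < 13 / 30 * L * (2 * 0.6931471808) := by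
    have h4 : (0:ℝ) < Real.log 4 := Real.log_pos (by norm_num)
    nlinarith
  have hmain : (k : ℝ) * Real.log X < L := by
    rw [hlogX]
    have hklogk : (k : ℝ) * Real.log k ≤ (k : ℝ) * Real.log L :=
      mul_le_mul_of_nonneg_left hlogk (le_of_lt hk0)
    nlinarith
  calc (k.factorial : ℝ) * (4 * L ^ 2) ^ k
      ≤ (k : ℝ) ^ k * (4 * L ^ 2) ^ k := by
        gcongr
        exact_mod_cast Nat.factorial_le_pow k
    _ = X ^ k := by rw [← mul_pow, hX]; ring_nf
    _ < Real.exp L := by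
        have hpow : (0 : ℝ) < X ^ k := pow_pos hX0 k
        rw [← Real.log_lt_log_iff hpow (Real.exp_pos L), Real.log_exp, Real.log_pow]
        calc (k : ℝ) * Real.log X < L := hmain

lemma exp_bound_up (x : ℝ) (hx1 : x < 1) : Real.exp x ≤ 1 / (1 - x) := by
  have h := Real.add_one_le_exp (-x)
  have hneg : Real.exp (-x) = (Real.exp x)⁻¹ := Real.exp_neg _
  rw [hneg] at h
  have h7 : (0 : ℝ) < 1 - x := by linarith
  have h8 : (1 - x : ℝ) ≤ (Real.exp x)⁻¹ := by linarith
  calc Real.exp x = ((Real.exp x)⁻¹)⁻¹ := by rw [inv_inv]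
    _ ≤ (1 - x)⁻¹ := inv_anti₀ h7 h8
    _ = 1 / (1 - x) := by rw [one_div]

lemma caseA (q : ℕ) (hq2 : 2 ≤ q) (k : ℕ) (hk1 : 1 ≤ k)
    (hksmall : (k : ℝ) < Real.log q / (10 * Real.log (Real.log q)))
    (h10 : 0 < Real.log (Real.log q))
    (hcase : Real.log q < 1.3) : q = 3 ∧ k = 1 := by
  have hq0 : (0 : ℝ) < q := by positivity
  have hq1 : (1 : ℝ) < q := by
    have : (2 : ℝ) ≤ q := by exact_mod_cast hq2
    linarith
  have hL0 : (0 : ℝ) < Real.log q := Real.log_pos hq1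
  have hL1 : (1 : ℝ) < Real.log q := (Real.log_pos_iff hL0.le).mp h10
  have hexpe : (2.7182818283 : ℝ) < Real.exp 1 := Real.exp_one_gt_d9
  have hexpe' : Real.exp 1 < 2.7182818286 := Real.exp_one_lt_d9
  have hqlow : (2.7182818283 : ℝ) < q := by
    calc (2.7182818283 : ℝ) < Real.exp 1 := hexpe
      _ < Real.exp (Real.log q) := Real.exp_lt_exp.mpr hL1
      _ = q := Real.exp_log hq0
  have hqhigh : (q : ℝ) < 4 := by
    have h13 : Real.exp 1.3 ≤ 2.7182818286 * (1 / 0.7) := by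
      have : Real.exp (1.3 : ℝ) = Real.exp 1 * Real.exp 0.3 := by
        rw [← Real.exp_add]; norm_num
      rw [this]
      have h3 := exp_bound_up 0.3 (by norm_num)
      have := Real.exp_pos (0.3 : ℝ)
      nlinarith
    calc (q : ℝ) = Real.exp (Real.log q) := (Real.exp_log hq0).symm
      _ < Real.exp 1.3 := Real.exp_lt_exp.mpr hcase
      _ ≤ 2.7182818286 * (1 / 0.7) := h13
      _ < 4 := by norm_num
  have hq3 : q = 3 := by
    have h1 : q < 4 := by exact_mod_cast hqhigh
    have h2 : 2 < q := by
      have : (2 : ℝ) < q := by linarith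
      exact_mod_cast this
    omega
  subst hq3
  refine ⟨rfl, ?_⟩
  have hlog3low : (1.09 : ℝ) ≤ Real.log 3 := by
    rw [Real.le_log_iff_exp_le (by norm_num : (0:ℝ) < 3)]
    have : Real.exp (1.09 : ℝ) = Real.exp 1 * Real.exp 0.09 := by
      rw [← Real.exp_add]; norm_num
    rw [this]
    have h09 := exp_bound_up 0.09 (by norm_num)
    have := Real.exp_pos (0.09 : ℝ)
    nlinarith
  have hlog3high : Real.log 3 ≤ 1.27 := by
    rw [Real.log_le_iff_le_exp (by norm_num : (0:ℝ) < 3)]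
    have : Real.exp (1.27 : ℝ) = Real.exp 1 * Real.exp 0.27 := by
      rw [← Real.exp_add]; norm_num
    rw [this]
    have h27 := Real.add_one_le_exp (0.27 : ℝ)
    nlinarith
  have hloglog : (9 / 109 : ℝ) ≤ Real.log (Real.log 3) := by
    have h1 : Real.log (1.09 : ℝ) ≤ Real.log (Real.log 3) :=
      Real.log_le_log (by norm_num) hlog3low
    have h2 : (1 : ℝ) - (1.09)⁻¹ ≤ Real.log 1.09 :=
      Real.one_sub_inv_le_log_of_pos (by norm_num)
    have : (9 / 109 : ℝ) = 1 - (1.09)⁻¹ := by norm_num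
    linarith
  have hksmall' : (k : ℝ) < Real.log 3 / (10 * Real.log (Real.log 3)) := by
    have h3 : ((3 : ℕ) : ℝ) = (3 : ℝ) := by norm_num
    rw [h3] at hksmall
    exact hksmall
  have hden : (0 : ℝ) < 10 * Real.log (Real.log 3) := by linarith
  have hfin : (k : ℝ) < 2 := by
    have hdiv : Real.log 3 / (10 * Real.log (Real.log 3)) ≤ 1.27 / (10 * (9 / 109)) :=
      div_le_div₀ (by norm_num) hlog3high (by norm_num) (by linarith)
    have : (1.27 : ℝ) / (10 * (9 / 109)) < 2 := by norm_num
    linarith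
  have : k < 2 := by exact_mod_cast hfin
  omega

theorem stmt4 (q : ℕ) (hq : q.Prime) (k : ℕ) (hk : 0 < k)
    (hksmall : (k : ℝ) < Real.log q / (10 * Real.log (Real.log q)))
    (n : Fin k → ℕ) (hn : ∀ j, n j ∈ Finset.Icc 2 (q - 1)) :
    (∀ α : Fin k → ℤ, ∏ j, ((n j : ℚ) ^ (α j)) = 1 → α = 0) ↔
      (∀ β : Fin k → ZMod q, (∀ v, ∑ j, β j * L q (n j) v = 0) → β = 0) := by
  classical
  haveI : Fact q.Prime := ⟨hq⟩
  have hq2 : 2 ≤ q := hq.two_le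
  have hn2 : ∀ j, 2 ≤ n j := fun j => (Finset.mem_Icc.mp (hn j)).1
  have hnq : ∀ j, n j ≤ q - 1 := fun j => (Finset.mem_Icc.mp (hn j)).2
  have hn0 : ∀ j, n j ≠ 0 := fun j => by have := hn2 j; omega
  have hdq : Nat.primeCounting (q - 1) = Nat.count Nat.Prime q := by
    unfold Nat.primeCounting Nat.primeCounting'
    congr 1
    omega
  set F : Fin k → Fin (Nat.primeCounting (q - 1)) → ℕ :=
    fun j i => (n j).factorization (Nat.nth Nat.Prime (i : ℕ)) with hF
  -- index existence
  have hidx : ∀ p : ℕ, p.Prime → p < q →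
      ∃ i : Fin (Nat.primeCounting (q - 1)), Nat.nth Nat.Prime (i : ℕ) = p := by
    intro p hp hpq
    refine ⟨⟨Nat.count Nat.Prime p, ?_⟩, Nat.nth_count hp⟩
    rw [hdq]
    refine (Nat.lt_nth_iff_count_lt Nat.infinite_setOf_prime).mpr ?_
    rw [Nat.nth_count hp]
    exact hpq
  -- extension from Fin d to all primes
  have hext : ∀ γ : Fin k → ℤ,
      (∀ i : Fin (Nat.primeCounting (q - 1)), ∑ j, γ j * (F j i : ℤ) = 0) →
      ∀ p : ℕ, p.Prime → ∑ j, γ j * ((n j).factorization p : ℤ) = 0 := by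
    intro γ hγ p hp
    by_cases hz : ∀ j, (n j).factorization p = 0
    · refine Finset.sum_eq_zero fun j _ => ?_
      rw [hz j]
      simp
    · push_neg at hz
      obtain ⟨j, hj⟩ := hz
      have hpn : p < q := by
        have hmem : p ∈ (n j).primeFactors := by
          rw [← Nat.support_factorization]
          exact Finsupp.mem_support_iff.mpr hj
        have := Nat.le_of_mem_primeFactors hmem
        have := hnq j
        omega
      obtain ⟨i, hi⟩ := hidx p hp hpn
      have := hγ i
      rw [hF] at this
      simp only at this
      rw [hi] at this
      exact this
  -- computation of L at single vectors
  have hL_single : ∀ (j : Fin k) (i : Fin (Nat.primeCounting (q - 1))),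
      L q (n j) (Pi.single i 1) = ((F j i : ℕ) : ZMod q) := by
    intro j i
    unfold L
    rw [Finset.sum_eq_single i]
    · simp [hF]
    · intro i' _ hne
      rw [Pi.single_apply, if_neg hne, mul_zero]
    · intro h
      exact absurd (Finset.mem_univ i) h
  constructor
  · -- multiplicative independence → linear independence
    intro hmul β hβ
    set M : Matrix (Fin (Nat.primeCounting (q - 1))) (Fin k) ℤ :=
      Matrix.of fun i j => (F j i : ℤ) with hM
    set G : Matrix (Fin k) (Fin k) ℤ := M.transpose * M with hG
    have hGapp : ∀ j l, G j l = ∑ i : Fin (Nat.primeCounting (q - 1)), (F j i : ℤ) * (F l i : ℤ) := by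
      intro j l
      rw [hG, Matrix.mul_apply]
      exact Finset.sum_congr rfl fun i _ => by rw [Matrix.transpose_apply, hM]; rfl
    -- Step 1: det G ≠ 0 from multiplicative independence
    have hGdet : G.det ≠ 0 := by
      intro h0
      have hdetmap : ((G.det : ℤ) : ℚ) = (G.map (Int.cast : ℤ → ℚ)).det := by
        have hh := RingHom.map_det (Int.castRingHom ℚ) G
        rw [RingHom.mapMatrix_apply] at hh
        exact hh
      have h0' : (G.map (Int.cast : ℤ → ℚ)).det = 0 := by
        rw [← hdetmap, h0]
        simp
      obtain ⟨c, hc0, hc⟩ := Matrix.exists_mulVec_eq_zero_iff.mpr h0'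
      set Mr : Matrix (Fin (Nat.primeCounting (q - 1))) (Fin k) ℚ :=
        M.map (Int.cast : ℤ → ℚ) with hMr
      have hGmap : G.map (Int.cast : ℤ → ℚ) = Mr.transpose * Mr := by
        ext j l
        rw [Matrix.map_apply, hGapp, Matrix.mul_apply]
        push_cast
        refine Finset.sum_congr rfl fun i _ => ?_
        rw [Matrix.transpose_apply, hMr]
        simp [Matrix.map_apply, hM]
      have hMc : Mr.mulVec c = 0 := by
        have h2 : dotProduct (Mr.mulVec c) (Mr.mulVec c) = 0 := by
          calc dotProduct (Mr.mulVec c) (Mr.mulVec c)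
              = dotProduct (Matrix.vecMul c Mr.transpose) (Mr.mulVec c) := by
                rw [Matrix.vecMul_transpose]
            _ = dotProduct c (Mr.transpose.mulVec (Mr.mulVec c)) :=
                (Matrix.dotProduct_mulVec c Mr.transpose (Mr.mulVec c)).symm
            _ = dotProduct c ((Mr.transpose * Mr).mulVec c) := by
                rw [Matrix.mulVec_mulVec]
            _ = 0 := by rw [← hGmap, hc, dotProduct_zero]
        exact dotProduct_self_eq_zero.mp h2
      -- clear denominators
      set N : ℕ := ∏ j, (c j).den with hN
      have hNj : ∀ j, (c j).den ∣ N := fun j => Finset.dvd_prod_of_mem _ (Finset.mem_univ j)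
      have hN0 : N ≠ 0 := by
        rw [hN, Finset.prod_ne_zero_iff]
        exact fun j _ => (c j).den_nz
      have hNq : (N : ℚ) ≠ 0 := Nat.cast_ne_zero.mpr hN0
      set α : Fin k → ℤ := fun j => (c j).num * ((N / (c j).den : ℕ) : ℤ) with hα
      have hcast : ∀ j, (α j : ℚ) = c j * N := by
        intro j
        have hd : ((c j).den : ℚ) ≠ 0 := Nat.cast_ne_zero.mpr (c j).den_nz
        have hdvd : ((c j).den : ℚ) * ((N / (c j).den : ℕ) : ℚ) = (N : ℚ) := by
          rw [← Nat.cast_mul, Nat.mul_div_cancel' (hNj j)]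
        have hnum : c j * (c j).den = ((c j).num : ℚ) := Rat.mul_den_eq_num (c j)
        rw [hα]
        push_cast
        calc ((c j).num : ℚ) * ((N / (c j).den : ℕ) : ℚ)
            = (c j * (c j).den) * ((N / (c j).den : ℕ) : ℚ) := by rw [hnum]
          _ = c j * (((c j).den : ℚ) * ((N / (c j).den : ℕ) : ℚ)) := by ring
          _ = c j * N := by rw [hdvd]
      have hMcℤ : ∀ i : Fin (Nat.primeCounting (q - 1)), ∑ j, α j * (F j i : ℤ) = 0 := by
        intro i
        have h3 : (Mr.mulVec c) i = 0 := congrFun hMc i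
        have h4 : (Mr.mulVec c) i = ∑ j, (F j i : ℚ) * c j := by
          rw [Matrix.mulVec, dotProduct]
          exact Finset.sum_congr rfl fun j _ => by rw [hMr, Matrix.map_apply, hM]; rfl
        have h5 : ((∑ j, α j * (F j i : ℤ) : ℤ) : ℚ) = (∑ j, (F j i : ℚ) * c j) * N := by
          push_cast
          rw [Finset.sum_mul]
          refine Finset.sum_congr rfl fun j _ => ?_
          have := hcast j
          push_cast at this
          rw [this]
          ring
        rw [h4] at h3
        rw [h3, zero_mul] at h5
        exact_mod_cast h5
      have hallp := hext α hMcℤ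
      have hprod := (prod_zpow_eq_one_iff n hn0 α).mpr hallp
      have hα0 : α = 0 := hmul α hprod
      apply hc0
      funext j
      have h6 := hcast j
      rw [congrFun hα0 j] at h6
      have h7 : c j * N = 0 := by exact_mod_cast h6.symm
      rcases mul_eq_zero.mp h7 with h | h
      · exact h
      · exact absurd h hNq
    -- Step 2: |det G| < q
    have hq0R : (0 : ℝ) < q := by positivity
    have hlt : |G.det| < (q : ℤ) := by
      -- bound on entries via Ω
      have hFS : ∀ j l, (G j l : ℝ) ≤
          (((n j).factorization.sum fun _ e => e : ℕ) : ℝ) *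
          (((n l).factorization.sum fun _ e => e : ℕ) : ℝ) := by
        intro j l
        have h1 : ∑ i : Fin (Nat.primeCounting (q - 1)), F j i * F l i ≤
            ((n j).factorization.sum fun _ e => e) * ((n l).factorization.sum fun _ e => e) := by
          calc ∑ i : Fin (Nat.primeCounting (q - 1)), F j i * F l i
              ≤ ∑ i : Fin (Nat.primeCounting (q - 1)),
                  F j i * ((n l).factorization.sum fun _ e => e) := by
                refine Finset.sum_le_sum fun i _ => Nat.mul_le_mul_left _ ?_
                calc F l i ≤ ∑ i' : Fin (Nat.primeCounting (q - 1)), F l i' :=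
                      Finset.single_le_sum (fun _ _ => Nat.zero_le _) (Finset.mem_univ i)
                  _ ≤ (n l).factorization.sum fun _ e => e :=
                      sum_fin_factorization_le _ _
            _ = (∑ i : Fin (Nat.primeCounting (q - 1)), F j i)
                  * ((n l).factorization.sum fun _ e => e) := by rw [Finset.sum_mul]
            _ ≤ ((n j).factorization.sum fun _ e => e)
                  * ((n l).factorization.sum fun _ e => e) :=
                Nat.mul_le_mul_right _ (sum_fin_factorization_le _ _)
        have h2 : G j l = ((∑ i : Fin (Nat.primeCounting (q - 1)), F j i * F l i : ℕ) : ℤ) := by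
          rw [hGapp]
          push_cast
          rfl
        rw [h2]
        exact_mod_cast h1
      have hGnn : ∀ j l, 0 ≤ (G j l : ℝ) := by
        intro j l
        rw [hGapp]
        push_cast
        positivity
      -- Ω(n j) as real
      by_cases hcase : Real.log q < 1.3
      · -- small case : q = 3, k = 1
        have h10 : 0 < Real.log (Real.log q) := by
          by_contra hcon
          push_neg at hcon
          have hd : Real.log q / (10 * Real.log (Real.log q)) ≤ 0 := by
            apply div_nonpos_of_nonneg_of_nonpos
            · exact Real.log_natCast_nonneg q
            · linarith
          have : (1 : ℝ) ≤ (k : ℝ) := by exact_mod_cast hk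
          linarith
        obtain ⟨hq3, hk1⟩ := caseA q hq2 k hk hksmall h10 hcase
        have hOm1 : ∀ j, ((n j).factorization.sum fun _ e => e) ≤ 1 := by
          intro j
          have hnj : n j = 2 := by
            have := hn2 j
            have := hnq j
            omega
          have h2p : (2:ℕ) ^ ((n j).factorization.sum fun _ e => e) ≤ 2 :=
            le_trans (two_pow_bigOm_le (hn0 j)) (le_of_eq hnj)
          by_contra hcon
          push_neg at hcon
          have : 2 ^ 2 ≤ 2 ^ ((n j).factorization.sum fun _ e => e) :=
            Nat.pow_le_pow_right (by norm_num) hcon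
          omega
        refine det_abs_lt G (E := 1) ?_ ?_
        · intro j l
          rw [abs_of_nonneg (hGnn j l)]
          calc (G j l : ℝ) ≤ _ := hFS j l
            _ ≤ 1 * 1 := by
                have h1 := hOm1 j
                have h2 := hOm1 l
                have h1' : (((n j).factorization.sum fun _ e => e : ℕ) : ℝ) ≤ 1 := by
                  exact_mod_cast h1
                have h2' : (((n l).factorization.sum fun _ e => e : ℕ) : ℝ) ≤ 1 := by
                  exact_mod_cast h2
                have h3' : (0:ℝ) ≤ (((n l).factorization.sum fun _ e => e : ℕ) : ℝ) := by positivity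
                nlinarith
            _ = 1 := by norm_num
        · rw [hk1, hq3]
          norm_num
      · -- large case
        push_neg at hcase
        have hOm : ∀ j, (((n j).factorization.sum fun _ e => e : ℕ) : ℝ) ≤ 2 * Real.log q := by
          intro j
          have h2p : (2 : ℕ) ^ ((n j).factorization.sum fun _ e => e) ≤ q := by
            calc (2:ℕ) ^ ((n j).factorization.sum fun _ e => e) ≤ n j := two_pow_bigOm_le (hn0 j)
              _ ≤ q := by have := hnq j; omega
          have h2pR : (2 : ℝ) ^ ((n j).factorization.sum fun _ e => e) ≤ (q : ℝ) := by
            exact_mod_cast h2p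
          have hlog : (((n j).factorization.sum fun _ e => e : ℕ) : ℝ) * Real.log 2 ≤ Real.log q := by
            have hp2 : (0:ℝ) < (2:ℝ) ^ ((n j).factorization.sum fun _ e => e) := by positivity
            have hh := Real.log_le_log hp2 h2pR
            rwa [Real.log_pow] at hh
          have hl2 : (0.6931471803 : ℝ) < Real.log 2 := Real.log_two_gt_d9
          have hnn : (0:ℝ) ≤ (((n j).factorization.sum fun _ e => e : ℕ) : ℝ) := by positivity
          nlinarith
        refine det_abs_lt G (E := 4 * (Real.log q) ^ 2) ?_ ?_
        · intro j l
          rw [abs_of_nonneg (hGnn j l)]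
          have h1 := hOm j
          have h2 := hOm l
          have h3 : (0:ℝ) ≤ (((n l).factorization.sum fun _ e => e : ℕ) : ℝ) := by positivity
          have h4 : (0:ℝ) ≤ (((n j).factorization.sum fun _ e => e : ℕ) : ℝ) := by positivity
          calc (G j l : ℝ) ≤ _ := hFS j l
            _ ≤ (2 * Real.log q) * (2 * Real.log q) := by nlinarith
            _ = 4 * (Real.log q) ^ 2 := by ring
        · have hk1R : (1 : ℝ) ≤ (k : ℝ) := by exact_mod_cast hk
          calc (k.factorial : ℝ) * (4 * (Real.log q) ^ 2) ^ k
              < Real.exp (Real.log q) := ineq_caseB k (Real.log q) hk1R hcase hksmall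
            _ = q := Real.exp_log hq0R
    -- Step 3: conclude β = 0
    have hβsingle : ∀ i : Fin (Nat.primeCounting (q - 1)),
        ∑ j, β j * ((F j i : ℕ) : ZMod q) = 0 := by
      intro i
      have := hβ (Pi.single i 1)
      calc ∑ j, β j * ((F j i : ℕ) : ZMod q)
          = ∑ j, β j * L q (n j) (Pi.single i 1) :=
            Finset.sum_congr rfl fun j _ => by rw [hL_single j i]
        _ = 0 := this
    set Gq : Matrix (Fin k) (Fin k) (ZMod q) := G.map (Int.cast : ℤ → ZMod q) with hGq
    have hdetq : Gq.det ≠ 0 := by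
      have hh := RingHom.map_det (Int.castRingHom (ZMod q)) G
      rw [RingHom.mapMatrix_apply] at hh
      have hdetmap2 : ((G.det : ℤ) : ZMod q) = (G.map (Int.cast : ℤ → ZMod q)).det := by
        exact hh
      rw [hGq]
      intro hcon
      rw [← hdetmap2] at hcon
      have hdvd : (q : ℤ) ∣ G.det := by
        rw [← ZMod.intCast_zmod_eq_zero_iff_dvd]
        exact_mod_cast hcon
      have habs : (q : ℤ) ≤ |G.det| :=
        Int.le_of_dvd (abs_pos.mpr hGdet) ((dvd_abs _ _).mpr hdvd)
      omega
    have hGqβ : Gq.mulVec β = 0 := by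
      funext l
      show (∑ j, Gq l j * β j) = 0
      calc ∑ j, Gq l j * β j
          = ∑ j, (∑ i : Fin (Nat.primeCounting (q - 1)),
              ((F l i : ℕ) : ZMod q) * ((F j i : ℕ) : ZMod q)) * β j := by
            refine Finset.sum_congr rfl fun j _ => ?_
            congr 1
            rw [hGq, Matrix.map_apply, hGapp]
            push_cast
            rfl
        _ = ∑ j, ∑ i : Fin (Nat.primeCounting (q - 1)),
              ((F l i : ℕ) : ZMod q) * (β j * ((F j i : ℕ) : ZMod q)) := by
            refine Finset.sum_congr rfl fun j _ => ?_
            rw [Finset.sum_mul]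
            exact Finset.sum_congr rfl fun i _ => by ring
        _ = ∑ i : Fin (Nat.primeCounting (q - 1)),
              ∑ j, ((F l i : ℕ) : ZMod q) * (β j * ((F j i : ℕ) : ZMod q)) :=
            Finset.sum_comm
        _ = ∑ i : Fin (Nat.primeCounting (q - 1)),
              ((F l i : ℕ) : ZMod q) * ∑ j, β j * ((F j i : ℕ) : ZMod q) := by
            refine Finset.sum_congr rfl fun i _ => ?_
            rw [Finset.mul_sum]
        _ = 0 := by
            refine Finset.sum_eq_zero fun i _ => ?_
            rw [hβsingle i, mul_zero]
    have hunit : IsUnit Gq.det := isUnit_iff_ne_zero.mpr hdetq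
    calc β = (1 : Matrix (Fin k) (Fin k) (ZMod q)).mulVec β := by rw [Matrix.one_mulVec]
      _ = (Gq⁻¹ * Gq).mulVec β := by rw [Matrix.nonsing_inv_mul Gq hunit]
      _ = Gq⁻¹.mulVec (Gq.mulVec β) := by rw [Matrix.mulVec_mulVec]
      _ = Gq⁻¹.mulVec (0 : Fin k → ZMod q) := by rw [hGqβ]
      _ = 0 := Matrix.mulVec_zero _

  · -- linear independence → multiplicative independence
    intro hlin α hα
    have hfac := (prod_zpow_eq_one_iff n hn0 α).mp hα
    by_contra hne
    obtain ⟨j₀, hj₀⟩ : ∃ j, α j ≠ 0 := by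
      by_contra h
      push_neg at h
      exact hne (funext h)
    have key : ∀ N : ℕ, ∀ γ : Fin k → ℤ, (γ j₀).natAbs ≤ N → γ j₀ ≠ 0 →
        (∀ p : ℕ, p.Prime → ∑ j, γ j * ((n j).factorization p : ℤ) = 0) → False := by
      intro N
      induction N with
      | zero => intro γ h1 h2 _; omega
      | succ N ih =>
        intro γ h1 h2 hγ
        by_cases hb : (fun j => ((γ j : ℤ) : ZMod q)) = 0
        · have hdvd : ∀ j, (q : ℤ) ∣ γ j := fun j => by
            have := congrFun hb j
            exact (ZMod.intCast_zmod_eq_zero_iff_dvd _ _).mp this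
          set δ : Fin k → ℤ := fun j => γ j / q with hδ
          have hγδ : ∀ j, γ j = q * δ j := fun j => (Int.mul_ediv_cancel' (hdvd j)).symm
          have hδ0 : δ j₀ ≠ 0 := fun h => h2 (by rw [hγδ j₀, h, mul_zero])
          refine ih δ ?_ hδ0 ?_
          · have h3 : (γ j₀).natAbs = q * (δ j₀).natAbs := by
              rw [hγδ j₀, Int.natAbs_mul, Int.natAbs_natCast]
            have h4 : (δ j₀).natAbs ≠ 0 := Int.natAbs_ne_zero.mpr hδ0
            have h5 : 2 * (δ j₀).natAbs ≤ q * (δ j₀).natAbs :=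
              Nat.mul_le_mul_right _ hq2
            omega
          · intro p hp
            have h5 := hγ p hp
            have h6 : ∑ j, γ j * ((n j).factorization p : ℤ)
                = q * ∑ j, δ j * ((n j).factorization p : ℤ) := by
              rw [Finset.mul_sum]
              refine Finset.sum_congr rfl fun j _ => by rw [hγδ j]; ring
            rw [h6] at h5
            have hq0 : (q : ℤ) ≠ 0 := by
              have := hq.pos
              exact_mod_cast this.ne'
            exact (mul_eq_zero.mp h5).resolve_left hq0
        · apply hb
          apply hlin
          intro v
          calc ∑ j, ((γ j : ℤ) : ZMod q) * L q (n j) v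
              = ∑ j, ∑ i : Fin (Nat.primeCounting (q - 1)), ((γ j : ℤ) : ZMod q)
                  * (((n j).factorization (Nat.nth Nat.Prime (i : ℕ)) : ℕ) : ZMod q) * v i := by
                refine Finset.sum_congr rfl fun j _ => ?_
                unfold L
                rw [Finset.mul_sum]
                exact Finset.sum_congr rfl fun i _ => by ring
            _ = ∑ i : Fin (Nat.primeCounting (q - 1)), (∑ j, ((γ j : ℤ) : ZMod q)
                  * (((n j).factorization (Nat.nth Nat.Prime (i : ℕ)) : ℕ) : ZMod q)) * v i := by
                rw [Finset.sum_comm]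
                exact Finset.sum_congr rfl fun i _ => by rw [Finset.sum_mul]
            _ = 0 := by
                refine Finset.sum_eq_zero fun i _ => ?_
                have h7 := hγ (Nat.nth Nat.Prime (i : ℕ)) (Nat.prime_nth_prime (i : ℕ))
                have h8 : ((∑ j, γ j * ((n j).factorization (Nat.nth Nat.Prime (i : ℕ)) : ℤ) : ℤ) : ZMod q) = 0 := by
                  rw [h7]; simp
                push_cast at h8
                rw [h8, zero_mul]
    exact key (α j₀).natAbs α le_rfl hj₀ hfac
end

section
/- Let X be a finite set, A₁,…,A_m ⊆ X, and K a nonnegative integer. Then ∑_{k=0}^{2K−1} (−1)^k ∑_{|S|=k} |∩_{i∈S} A_i| ≤ |X \ (A₁ ∪ ⋯ ∪ A_m)| ≤ ∑_{k=0}^{2K} (−1)^k ∑_{|S|=k} |∩_{i∈S} A_i|, where the inner sums range over subsets S ⊆ {1,…,m} of size k and the empty intersection is X. -/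
open Finset

-- partial alternating sum of binomial coefficients
lemma alt_partial (t n : ℕ) (ht : 1 ≤ t) :
    ∑ k ∈ range (n + 1), (-1 : ℤ) ^ k * (t.choose k) = (-1) ^ n * ((t - 1).choose n) := by
  induction n with
  | zero => simp
  | succ n ih =>
    rw [Finset.sum_range_succ, ih]
    obtain ⟨s, rfl⟩ : ∃ s, t = s + 1 := ⟨t - 1, (Nat.succ_pred_eq_of_pos ht).symm⟩
    simp only [Nat.add_sub_cancel]
    rw [Nat.choose_succ_succ]
    push_cast
    ring

lemma key (t N : ℕ) :
    (∑ k ∈ range (2 * N), (-1 : ℤ) ^ k * (t.choose k)) ≤ (if t = 0 then 1 else 0)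
    ∧ ((if t = 0 then 1 else 0) : ℤ) ≤ ∑ k ∈ range (2 * N + 1), (-1 : ℤ) ^ k * (t.choose k) := by
  rcases Nat.eq_zero_or_pos t with rfl | ht
  · simp only [if_pos rfl]
    have h : ∀ M : ℕ, ∑ k ∈ range M, (-1 : ℤ) ^ k * ((0 : ℕ).choose k) = if M = 0 then 0 else 1 := by
      intro M
      induction M with
      | zero => simp
      | succ M ih =>
        rw [Finset.sum_range_succ, ih]
        rcases Nat.eq_zero_or_pos M with rfl | hM
        · simp
        · rw [if_neg hM.ne', if_neg (Nat.succ_ne_zero M), Nat.choose_eq_zero_of_lt hM]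
          simp
    constructor
    · rw [h]; split <;> norm_num
    · rw [h, if_neg (Nat.succ_ne_zero _)]; simp
  · rw [if_neg ht.ne']
    constructor
    · rcases Nat.eq_zero_or_pos N with rfl | hN
      · simp
      · obtain ⟨M, hM⟩ : ∃ M, 2 * N = 2 * M + 1 + 1 := ⟨N - 1, by omega⟩
        rw [hM, alt_partial t (2 * M + 1) ht]
        have hodd : Odd (2 * M + 1) := ⟨M, by ring⟩
        rw [hodd.neg_one_pow]
        have : (0 : ℤ) ≤ ((t - 1).choose M : ℤ) := Int.natCast_nonneg _
        linarith
    · rw [alt_partial t (2 * N) ht, (even_two_mul N).neg_one_pow, one_mul]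
      exact_mod_cast Nat.zero_le _

theorem stmt8 (α : Type*) [DecidableEq α] (X : Finset α) (m K : ℕ)
    (A : Fin m → Finset α) (hA : ∀ i, A i ⊆ X) :
    (∑ k ∈ Finset.range (2 * K), (-1 : ℤ) ^ k *
        ∑ S ∈ Finset.powersetCard k (Finset.univ : Finset (Fin m)),
          ((X.filter (fun x => ∀ i ∈ S, x ∈ A i)).card : ℤ))
      ≤ ((X.filter (fun x => ∀ i, x ∉ A i)).card : ℤ)
    ∧ ((X.filter (fun x => ∀ i, x ∉ A i)).card : ℤ)
      ≤ ∑ k ∈ Finset.range (2 * K + 1), (-1 : ℤ) ^ k *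
        ∑ S ∈ Finset.powersetCard k (Finset.univ : Finset (Fin m)),
          ((X.filter (fun x => ∀ i ∈ S, x ∈ A i)).card : ℤ) := by
  set t : α → ℕ := fun x => ((univ : Finset (Fin m)).filter (fun i => x ∈ A i)).card with ht
  have hswap : ∀ N : ℕ,
      ∑ k ∈ Finset.range N, (-1 : ℤ) ^ k *
        ∑ S ∈ Finset.powersetCard k (Finset.univ : Finset (Fin m)),
          ((X.filter (fun x => ∀ i ∈ S, x ∈ A i)).card : ℤ)
      = ∑ x ∈ X, ∑ k ∈ Finset.range N, (-1 : ℤ) ^ k * ((t x).choose k) := by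
    intro N
    rw [Finset.sum_comm]
    refine Finset.sum_congr rfl fun k _ => ?_
    rw [← Finset.mul_sum]
    congr 1
    have hcard : ∀ S : Finset (Fin m),
        ((X.filter (fun x => ∀ i ∈ S, x ∈ A i)).card : ℤ)
        = ∑ x ∈ X, (if (∀ i ∈ S, x ∈ A i) then (1 : ℤ) else 0) := by
      intro S
      rw [Finset.card_filter]
      push_cast
      rfl
    simp_rw [hcard]
    rw [Finset.sum_comm]
    refine Finset.sum_congr rfl fun x _ => ?_
    have hpc : (Finset.powersetCard k ((univ : Finset (Fin m)).filter (fun i => x ∈ A i))).card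
        = (t x).choose k := by rw [Finset.card_powersetCard]
    rw [← hpc, Finset.sum_boole]
    norm_cast
    congr 1
    ext S
    simp [Finset.mem_powersetCard, Finset.subset_iff]
    tauto
  have hind : ((X.filter (fun x => ∀ i, x ∉ A i)).card : ℤ)
      = ∑ x ∈ X, (if t x = 0 then (1 : ℤ) else 0) := by
    have hfe : X.filter (fun x => ∀ i, x ∉ A i) = X.filter (fun x => t x = 0) :=
      Finset.filter_congr fun x _ => by
        simp [ht, Finset.card_eq_zero, Finset.filter_eq_empty_iff]
    rw [hfe, Finset.card_filter]
    push_cast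
    simp
  rw [hswap, hswap, hind]
  exact ⟨Finset.sum_le_sum fun x _ => (key (t x) K).1,
    Finset.sum_le_sum fun x _ => (key (t x) K).2⟩
end

section
/- With B = c₁ log log q and f(q) = c₂ log log log q for constants c₁ > 0 and c₂ > 2/log 2, the set 𝒩 = {n ∈ {2,…,q−1} : ν_p(n) ≤ f(q) for all primes p ≤ B, and ν_p(n) ≤ 1 for all primes p > B} satisfies #𝒩 = q + O(q/log log q), with implied constant strictly less than 1, as q → ∞. -/
open Finset Real Filter



lemma exists_small_totient (ε : ℝ) (hε : 0 < ε) :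
    ∃ M : ℕ, 1 ≤ M ∧ (M.totient : ℝ) ≤ ε * M := by
  -- partial sums of reciprocals of primes tend to infinity
  have hns := not_summable_one_div_on_primes
  have hnn : ∀ n : ℕ, 0 ≤ Set.indicator {p | p.Prime} (fun n : ℕ => (1 : ℝ) / n) n := by
    intro n
    apply Set.indicator_nonneg
    intro x _
    positivity
  have htend := (not_summable_iff_tendsto_nat_atTop_of_nonneg hnn).mp hns
  obtain ⟨N, hN⟩ := (htend.eventually_ge_atTop (-Real.log ε)).exists
  set P := (Finset.range N).filter Nat.Prime with hP
  have hsum : ∑ i ∈ Finset.range N, Set.indicator {p | p.Prime} (fun n : ℕ => (1 : ℝ) / n) i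
      = ∑ p ∈ P, (1 : ℝ) / p := by
    rw [hP, Finset.sum_filter]
    apply Finset.sum_congr rfl
    intro i _
    by_cases h : i.Prime
    · simp [Set.indicator_of_mem, h, Set.mem_setOf_eq]
    · simp [Set.indicator_of_notMem, h, Set.mem_setOf_eq]
  rw [hsum] at hN
  refine ⟨∏ p ∈ P, p, Finset.one_le_prod' fun p hp => (Finset.mem_filter.mp hp).2.one_lt.le, ?_⟩
  have hprimes : ∀ p ∈ P, p.Prime := fun p hp => (Finset.mem_filter.mp hp).2
  have hfact : (∏ p ∈ P, p).primeFactors = P := Nat.primeFactors_prod hprimes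
  have htot : ((∏ p ∈ P, p).totient : ℚ) = (∏ p ∈ P, p) * ∏ p ∈ P, (1 - (p : ℚ)⁻¹) := by
    rw [Nat.totient_eq_mul_prod_factors, hfact]
  have htotR : ((∏ p ∈ P, p).totient : ℝ) = (∏ p ∈ P, (p:ℕ) : ℝ) * ∏ p ∈ P, (1 - (p : ℝ)⁻¹) := by
    have := congrArg (fun x : ℚ => (x : ℝ)) htot
    push_cast at this ⊢
    exact this
  rw [htotR, mul_comm]
  push_cast
  apply mul_le_mul_of_nonneg_right _ (by positivity : (0:ℝ) ≤ ∏ p ∈ P, (p:ℝ))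
  calc ∏ p ∈ P, (1 - (p : ℝ)⁻¹) ≤ ∏ p ∈ P, Real.exp (-(1/p)) := by
        apply Finset.prod_le_prod
        · intro p hp
          have h2 : (2:ℝ) ≤ p := by exact_mod_cast (hprimes p hp).two_le
          have : (p:ℝ)⁻¹ ≤ 1 := by
            rw [inv_le_one_iff₀]; right; linarith
          linarith
        · intro p hp
          have := Real.add_one_le_exp (-(1/(p:ℝ)))
          have hp' : (1:ℝ)/p = (p:ℝ)⁻¹ := one_div _
          linarith
    _ = Real.exp (-∑ p ∈ P, (1:ℝ)/p) := by
        rw [← Real.exp_sum]; congr 1; rw [Finset.sum_neg_distrib]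
    _ ≤ Real.exp (Real.log ε) := by
        apply Real.exp_le_exp.mpr; linarith
    _ = ε := Real.exp_log hε



lemma telescope_bound (b M N : ℕ) (hb : 1 ≤ b) (hM : 1 ≤ M) :
    ∑ j ∈ Finset.range (N+1), (1:ℝ)/((b:ℝ)+j*M)^2 ≤ 1/(b:ℝ)^2 + 1/((M:ℝ)*b) := by
  have hbR : (1:ℝ) ≤ b := by exact_mod_cast hb
  have hMR : (1:ℝ) ≤ M := by exact_mod_cast hM
  have hpos : ∀ j : ℕ, (0:ℝ) < (b:ℝ)+j*M := by
    intro j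
    have : (0:ℝ) ≤ (j:ℝ)*M := by positivity
    linarith
  set f : ℕ → ℝ := fun j => 1/((b:ℝ)+j*M) with hf
  rw [Finset.sum_range_succ']
  have h1 : ∑ j ∈ Finset.range N, (1:ℝ)/((b:ℝ)+(j+1:ℕ)*M)^2
      ≤ ∑ j ∈ Finset.range N, (f j - f (j+1))/M := by
    apply Finset.sum_le_sum
    intro j _
    have h0 := hpos j
    have h1 := hpos (j+1)
    have hstep : ((j+1:ℕ):ℝ)*M = (j:ℝ)*M + M := by push_cast; ring
    simp only [hf]
    rw [div_sub_div _ _ (ne_of_gt h0) (ne_of_gt h1), div_div]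
    rw [show (1:ℝ)*((b:ℝ)+(j+1:ℕ)*M) - ((b:ℝ)+j*M)*1 = M by rw [hstep]; ring]
    rw [div_le_div_iff₀ (by positivity) (by positivity)]
    have key : (M:ℝ)*((b:ℝ)+((j+1:ℕ):ℝ)*M)^2 - 1*(((b:ℝ)+j*M)*((b:ℝ)+((j+1:ℕ):ℝ)*M)*M)
        = M*(M*((b:ℝ)+((j+1:ℕ):ℝ)*M)) := by rw [hstep]; ring
    nlinarith [mul_pos (show (0:ℝ) < M by linarith) (mul_pos (show (0:ℝ) < M by linarith) h1)]
  have h2 : ∑ j ∈ Finset.range N, (f j - f (j+1))/M ≤ 1/((M:ℝ)*b) := by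
    rw [← Finset.sum_div, Finset.sum_range_sub' f]
    have hN := hpos N
    have hfN : (0:ℝ) ≤ f N := by simp only [hf]; positivity
    have hf0 : f 0 = 1/(b:ℝ) := by simp [hf]
    rw [div_le_div_iff₀ (by linarith : (0:ℝ) < M) (by positivity)]
    rw [hf0]
    have hexp : (1/(b:ℝ) - f N)*((M:ℝ)*b) = (1/(b:ℝ))*((M:ℝ)*b) - f N * ((M:ℝ)*b) := by ring
    have hid : (1/(b:ℝ)) * ((M:ℝ)*b) = M := by field_simp
    have hnn : 0 ≤ f N * ((M:ℝ)*b) := mul_nonneg hfN (by positivity)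
    rw [hexp, hid]
    linarith
  have h3 : (1:ℝ)/((b:ℝ)+((0:ℕ):ℝ)*M)^2 = 1/(b:ℝ)^2 := by norm_num
  calc (∑ j ∈ Finset.range N, (1:ℝ)/((b:ℝ)+(j+1:ℕ)*M)^2) + (1:ℝ)/((b:ℝ)+((0:ℕ):ℝ)*M)^2
      ≤ 1/((M:ℝ)*b) + 1/(b:ℝ)^2 := by rw [h3]; exact add_le_add (h1.trans h2) le_rfl
    _ = 1/(b:ℝ)^2 + 1/((M:ℝ)*b) := by ring



lemma coprime_tail_sum (M b N : ℕ) (hM : 1 ≤ M) (hb : 1 ≤ b) :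
    ∑ m ∈ (Finset.Ioc b N).filter (fun m => M.Coprime m), (1:ℝ)/(m:ℝ)^2
      ≤ (M.totient : ℝ) * (1/(b:ℝ)^2 + 1/((M:ℝ)*b)) := by
  classical
  set F := (Finset.Ioc b N).filter (fun m => M.Coprime m) with hF
  set blk : ℕ → ℕ := fun m => (m - (b+1)) / M with hblk
  have hmaps : ∀ m ∈ F, blk m ∈ Finset.range (N+1) := by
    intro m hm
    have hm' := Finset.mem_filter.mp hm
    have h2 : m ≤ N := (Finset.mem_Ioc.mp hm'.1).2
    simp only [Finset.mem_range, hblk]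
    calc (m - (b+1))/M ≤ m - (b+1) := Nat.div_le_self _ _
      _ ≤ N := le_trans (Nat.sub_le _ _) h2
      _ < N + 1 := Nat.lt_succ_self _
  have hkey : ∀ j, ∑ m ∈ F.filter (fun m => blk m = j), (1:ℝ)/(m:ℝ)^2
      ≤ (M.totient : ℝ) * ((1:ℝ)/((b:ℝ)+j*M)^2) := by
    intro j
    have hMpos : 0 < M := hM
    have hsub : F.filter (fun m => blk m = j)
        ⊆ (Finset.Ico (b+1+j*M) ((b+1+j*M)+M)).filter (fun m => M.Coprime m) := by
      intro m hm
      have hm1 := Finset.mem_filter.mp hm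
      have hm2 := Finset.mem_filter.mp hm1.1
      have hbm : b < m := (Finset.mem_Ioc.mp hm2.1).1
      have hj : (m - (b+1))/M = j := hm1.2
      have hdm := Nat.div_mul_le_self (m - (b+1)) M
      have hmod := Nat.div_add_mod (m - (b+1)) M
      have hmlt := Nat.mod_lt (m - (b+1)) hMpos
      rw [hj] at hdm hmod
      have hc : j*M = M*j := Nat.mul_comm _ _
      refine Finset.mem_filter.mpr ⟨Finset.mem_Ico.mpr ⟨by omega, by omega⟩, hm2.2⟩
    have hcard : (F.filter (fun m => blk m = j)).card ≤ M.totient := by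
      calc (F.filter (fun m => blk m = j)).card
          ≤ ((Finset.Ico (b+1+j*M) ((b+1+j*M)+M)).filter (fun m => M.Coprime m)).card :=
            Finset.card_le_card hsub
        _ = M.totient := Nat.filter_coprime_Ico_eq_totient M (b+1+j*M)
    have hterm : ∀ m ∈ F.filter (fun m => blk m = j), (1:ℝ)/(m:ℝ)^2 ≤ (1:ℝ)/((b:ℝ)+j*M)^2 := by
      intro m hm
      have hmem := Finset.mem_Ico.mp (Finset.mem_filter.mp (hsub hm)).1
      have hge : b+1+j*M ≤ m := hmem.1
      have hgeR : (b:ℝ)+j*M+1 ≤ (m:ℝ) := by exact_mod_cast by omega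
      have hbpos : (0:ℝ) < (b:ℝ)+j*M := by
        have : (1:ℝ) ≤ (b:ℝ) := by exact_mod_cast hb
        positivity
      apply div_le_div_of_nonneg_left (by norm_num) (by positivity)
      nlinarith
    calc ∑ m ∈ F.filter (fun m => blk m = j), (1:ℝ)/(m:ℝ)^2
        ≤ (F.filter (fun m => blk m = j)).card • ((1:ℝ)/((b:ℝ)+j*M)^2) :=
          Finset.sum_le_card_nsmul _ _ _ hterm
      _ = ((F.filter (fun m => blk m = j)).card : ℝ) * ((1:ℝ)/((b:ℝ)+j*M)^2) := by
          rw [nsmul_eq_mul]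
      _ ≤ (M.totient : ℝ) * ((1:ℝ)/((b:ℝ)+j*M)^2) := by
          apply mul_le_mul_of_nonneg_right (by exact_mod_cast hcard) (by positivity)
  calc ∑ m ∈ F, (1:ℝ)/(m:ℝ)^2
      = ∑ j ∈ Finset.range (N+1), ∑ m ∈ F.filter (fun m => blk m = j), (1:ℝ)/(m:ℝ)^2 :=
        (Finset.sum_fiberwise_of_maps_to hmaps _).symm
    _ ≤ ∑ j ∈ Finset.range (N+1), (M.totient : ℝ) * ((1:ℝ)/((b:ℝ)+j*M)^2) :=
        Finset.sum_le_sum fun j _ => hkey j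
    _ = (M.totient : ℝ) * ∑ j ∈ Finset.range (N+1), (1:ℝ)/((b:ℝ)+j*M)^2 := by
        rw [Finset.mul_sum]
    _ ≤ (M.totient : ℝ) * (1/(b:ℝ)^2 + 1/((M:ℝ)*b)) :=
        mul_le_mul_of_nonneg_left (telescope_bound b M N hb hM) (by positivity)

set_option maxHeartbeats 1000000 in
theorem stmt19 (c₁ c₂ : ℝ) (h₁ : 0 < c₁) (h₂ : 2 / Real.log 2 < c₂) :
    ∃ C : ℝ, 0 ≤ C ∧ C < 1 ∧ ∃ Q : ℕ, ∀ q : ℕ, Q ≤ q →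
      |(Set.ncard {n : ℕ | 2 ≤ n ∧ n ≤ q - 1 ∧
            (∀ p : ℕ, p.Prime → (p : ℝ) ≤ c₁ * Real.log (Real.log q) →
              (n.factorization p : ℝ) ≤ c₂ * Real.log (Real.log (Real.log q))) ∧
            (∀ p : ℕ, p.Prime → c₁ * Real.log (Real.log q) < (p : ℝ) →
              n.factorization p ≤ 1)} : ℝ) - q|
        ≤ C * q / Real.log (Real.log q) := by
  classical
  have hlog2 : (0:ℝ) < Real.log 2 := Real.log_pos one_lt_two
  have hc2 : 0 < c₂ := lt_trans (by positivity) h₂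
  have hδ : 0 < c₂ * Real.log 2 - 2 := by
    have h := (div_lt_iff₀ hlog2).mp h₂
    nlinarith
  obtain ⟨M, hM1, hMtot⟩ := exists_small_totient (c₁/32) (by positivity)
  refine ⟨1/2, by norm_num, by norm_num, ?_⟩
  have t0 : Tendsto (fun q : ℕ => Real.log q) atTop atTop :=
    Real.tendsto_log_atTop.comp tendsto_natCast_atTop_atTop
  have t1 : Tendsto (fun q : ℕ => Real.log (Real.log q)) atTop atTop :=
    Real.tendsto_log_atTop.comp t0
  have t2 : Tendsto (fun q : ℕ => Real.log (Real.log (Real.log q))) atTop atTop :=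
    Real.tendsto_log_atTop.comp t1
  have t1' : Tendsto (fun q : ℕ => c₁ * Real.log (Real.log q)) atTop atTop :=
    t1.const_mul_atTop h₁
  have ev : ∀ᶠ q : ℕ in atTop,
      ((M:ℝ) + 2 ≤ c₁ * Real.log (Real.log q) ∧ 1 ≤ Real.log (Real.log q))
      ∧ (Real.log (8 * c₁) / (c₂ * Real.log 2 - 2) ≤ Real.log (Real.log (Real.log q))
         ∧ 0 ≤ Real.log (Real.log (Real.log q))) := by
    refine ((t1'.eventually_ge_atTop _).and (t1.eventually_ge_atTop _)).and
      ((t2.eventually_ge_atTop _).and ?_)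
    exact t2.eventually_ge_atTop 0
  obtain ⟨Q₀, hQ₀⟩ := eventually_atTop.mp ev
  refine ⟨max Q₀ 1024, fun q hq => ?_⟩
  obtain ⟨⟨hBM, hL1⟩, hl0, hl0'⟩ := hQ₀ q (le_trans (le_max_left _ _) hq)
  have hq1024 : (1024:ℕ) ≤ q := le_trans (le_max_right _ _) hq
  have hq2 : 2 ≤ q := by omega
  have hqR : (1024:ℝ) ≤ (q:ℝ) := by exact_mod_cast hq1024
  have hq0R : (0:ℝ) ≤ (q:ℝ) := by linarith
  set L : ℝ := Real.log (Real.log q) with hLdef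
  set l : ℝ := Real.log L with hldef
  have hLpos : 0 < L := by linarith
  set B : ℝ := c₁ * L with hBdef
  have hB3 : (M:ℝ) + 2 ≤ B := hBM
  have hMR : (1:ℝ) ≤ (M:ℝ) := by exact_mod_cast hM1
  have hB2 : (2:ℝ) ≤ B := by linarith
  set B' : ℕ := ⌊B⌋₊ with hB'def
  have hB'M : M ≤ B' := Nat.le_floor (by linarith)
  have hB'1 : 1 ≤ B' := le_trans hM1 hB'M
  have hB'le : (B':ℝ) ≤ B := Nat.floor_le (by linarith)
  have hB'gt : B - 1 < (B':ℝ) := Nat.sub_one_lt_floor B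
  have hB'R1 : (1:ℝ) ≤ (B':ℝ) := by exact_mod_cast hB'1
  set f : ℝ := c₂ * l with hfdef
  have hf0 : 0 ≤ f := mul_nonneg hc2.le hl0'
  set K : ℕ := ⌊f⌋₊ + 1 with hKdef
  have hfK : f < (K:ℝ) := by
    push_cast [hKdef]
    exact Nat.lt_floor_add_one f
  -- the good predicate
  set Good : ℕ → Prop := fun n =>
      (∀ p : ℕ, p.Prime → (p : ℝ) ≤ B → ((n.factorization p : ℕ) : ℝ) ≤ f) ∧
      (∀ p : ℕ, p.Prime → B < (p : ℝ) → n.factorization p ≤ 1) with hGood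
  set T : Finset ℕ := Finset.Ioc 1 (q-1) with hTdef
  set S : Finset ℕ := T.filter Good with hSdef
  have hset : {n : ℕ | 2 ≤ n ∧ n ≤ q - 1 ∧
      (∀ p : ℕ, p.Prime → (p : ℝ) ≤ c₁ * Real.log (Real.log q) →
        (n.factorization p : ℝ) ≤ c₂ * Real.log (Real.log (Real.log q))) ∧
      (∀ p : ℕ, p.Prime → c₁ * Real.log (Real.log q) < (p : ℝ) →
        n.factorization p ≤ 1)} = (S : Set ℕ) := by
    ext n
    simp only [hSdef, hTdef, hGood, Set.mem_setOf_eq, Finset.coe_filter, Finset.mem_Ioc,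
      Set.mem_setOf_eq]
    constructor
    · rintro ⟨h1, h2, h3, h4⟩
      exact ⟨⟨h1, h2⟩, h3, h4⟩
    · rintro ⟨⟨h1, h2⟩, h3, h4⟩
      exact ⟨h1, h2, h3, h4⟩
  rw [hset, Set.ncard_coe_finset]
  -- counting
  set Bad : Finset ℕ := T.filter (fun n => ¬ Good n) with hBadDef
  have hsplit : S.card + Bad.card = T.card := Finset.card_filter_add_card_filter_not _
  have hTcard : T.card = q - 2 := by rw [hTdef, Nat.card_Ioc]; omega
  set P1 : Finset ℕ := (Finset.Ioc 1 B').filter Nat.Prime with hP1def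
  set F : Finset ℕ := (Finset.Ioc B' (q-1)).filter (fun m => M.Coprime m) with hFdef
  have hcover : Bad ⊆ P1.biUnion (fun p => T.filter (fun n => p^K ∣ n))
      ∪ F.biUnion (fun m => T.filter (fun n => m^2 ∣ n)) := by
    intro n hn
    obtain ⟨hnT, hnG⟩ := Finset.mem_filter.mp hn
    have hn2 : 1 < n := (Finset.mem_Ioc.mp hnT).1
    have hnq : n ≤ q - 1 := (Finset.mem_Ioc.mp hnT).2
    have hn0 : n ≠ 0 := by omega
    rw [hGood, not_and_or] at hnG
    rcases hnG with h | h
    · push_neg at h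
      obtain ⟨p, hp, hpB, hpf⟩ := h
      have hpK : K ≤ n.factorization p := by
        by_contra hcon
        push_neg at hcon
        have hle : n.factorization p ≤ ⌊f⌋₊ := by omega
        have : ((n.factorization p : ℕ) : ℝ) ≤ f :=
          le_trans (by exact_mod_cast hle) (Nat.floor_le hf0)
        linarith
      have hdvd : p^K ∣ n := (Nat.Prime.pow_dvd_iff_le_factorization hp hn0).mpr hpK
      apply Finset.mem_union_left
      apply Finset.mem_biUnion.mpr
      refine ⟨p, ?_, Finset.mem_filter.mpr ⟨hnT, hdvd⟩⟩
      exact Finset.mem_filter.mpr ⟨Finset.mem_Ioc.mpr ⟨hp.one_lt, Nat.le_floor hpB⟩, hp⟩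
    · push_neg at h
      obtain ⟨p, hp, hpB, hpf⟩ := h
      have hv2 : 2 ≤ n.factorization p := by omega
      have hdvd : p^2 ∣ n := (Nat.Prime.pow_dvd_iff_le_factorization hp hn0).mpr hv2
      have hpn : p ∣ n := dvd_trans (dvd_pow_self p two_ne_zero) hdvd
      have hpq : p ≤ q - 1 := le_trans (Nat.le_of_dvd (by omega) hpn) hnq
      have hB'p : B' < p := by
        have : (B':ℝ) < (p:ℝ) := lt_of_le_of_lt hB'le hpB
        exact_mod_cast this
      have hcop : M.Coprime p := by
        rw [Nat.coprime_comm]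
        apply (Nat.Prime.coprime_iff_not_dvd hp).mpr
        intro hdM
        have := Nat.le_of_dvd (by omega) hdM
        omega
      apply Finset.mem_union_right
      apply Finset.mem_biUnion.mpr
      exact ⟨p, Finset.mem_filter.mpr ⟨Finset.mem_Ioc.mpr ⟨hB'p, hpq⟩, hcop⟩,
        Finset.mem_filter.mpr ⟨hnT, hdvd⟩⟩
  have hcount : ∀ d : ℕ, 1 ≤ d → ((T.filter (fun n => d ∣ n)).card : ℝ) ≤ (q:ℝ)/(d:ℝ) := by
    intro d hd
    have h1 : (T.filter (fun n => d ∣ n)).card ≤ (q-1)/d := by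
      calc (T.filter (fun n => d ∣ n)).card
          ≤ ((Finset.Ioc 0 (q-1)).filter (fun n => d ∣ n)).card :=
            Finset.card_le_card (Finset.filter_subset_filter _
              (Finset.Ioc_subset_Ioc (by norm_num) le_rfl))
        _ = (q-1)/d := Nat.Ioc_filter_dvd_card_eq_div _ _
    calc ((T.filter (fun n => d ∣ n)).card : ℝ) ≤ (((q-1)/d : ℕ) : ℝ) := by exact_mod_cast h1
      _ ≤ ((q-1 : ℕ):ℝ)/(d:ℝ) := Nat.cast_div_le
      _ ≤ (q:ℝ)/(d:ℝ) := by
          have hdp : (0:ℝ) < (d:ℝ) := by exact_mod_cast hd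
          have : ((q-1:ℕ):ℝ) ≤ (q:ℝ) := by exact_mod_cast Nat.sub_le q 1
          gcongr
  -- the bad count, in the reals
  have hBadR : (Bad.card : ℝ) ≤ ∑ p ∈ P1, (q:ℝ)/((p:ℝ)^K) + ∑ m ∈ F, (q:ℝ)/((m:ℝ)^2) := by
    have hc1 : (Bad.card : ℕ) ≤ (P1.biUnion (fun p => T.filter (fun n => p^K ∣ n))).card
        + (F.biUnion (fun m => T.filter (fun n => m^2 ∣ n))).card :=
      le_trans (Finset.card_le_card hcover) (Finset.card_union_le _ _)
    have hc2' : (P1.biUnion (fun p => T.filter (fun n => p^K ∣ n))).card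
        ≤ ∑ p ∈ P1, (T.filter (fun n => p^K ∣ n)).card := Finset.card_biUnion_le
    have hc3 : (F.biUnion (fun m => T.filter (fun n => m^2 ∣ n))).card
        ≤ ∑ m ∈ F, (T.filter (fun n => m^2 ∣ n)).card := Finset.card_biUnion_le
    have hstep : (Bad.card : ℝ) ≤ (∑ p ∈ P1, ((T.filter (fun n => p^K ∣ n)).card : ℝ))
        + ∑ m ∈ F, ((T.filter (fun n => m^2 ∣ n)).card : ℝ) := by
      push_cast
      exact_mod_cast le_trans hc1 (add_le_add hc2' hc3)
    refine le_trans hstep (add_le_add (Finset.sum_le_sum ?_) (Finset.sum_le_sum ?_))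
    · intro p hp
      have hp2 : 2 ≤ p := (Finset.mem_filter.mp hp).2.two_le
      have h := hcount (p^K) (Nat.one_le_iff_ne_zero.mpr (pow_ne_zero _ (by omega)))
      calc ((T.filter (fun n => p^K ∣ n)).card : ℝ) ≤ (q:ℝ)/((p^K : ℕ):ℝ) := h
        _ = (q:ℝ)/((p:ℝ)^K) := by push_cast; ring_nf
    · intro m hm
      have hm1 : B' < m := (Finset.mem_Ioc.mp (Finset.mem_filter.mp hm).1).1
      have h := hcount (m^2) (Nat.one_le_iff_ne_zero.mpr (pow_ne_zero _ (by omega)))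
      calc ((T.filter (fun n => m^2 ∣ n)).card : ℝ) ≤ (q:ℝ)/((m^2 : ℕ):ℝ) := h
        _ = (q:ℝ)/((m:ℝ)^2) := by push_cast; ring_nf
  -- bound on the first sum
  have hLexp : L = Real.exp l := (Real.exp_log hLpos).symm
  have h2K : 8*c₁*L^2 ≤ (2:ℝ)^K := by
    have e1 : (2:ℝ)^K = (2:ℝ)^((K:ℕ):ℝ) := (Real.rpow_natCast 2 K).symm
    have e2 : (2:ℝ)^(f:ℝ) ≤ (2:ℝ)^((K:ℕ):ℝ) :=
      Real.rpow_le_rpow_of_exponent_le one_le_two hfK.le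
    have e3 : (2:ℝ)^(f:ℝ) = Real.exp (Real.log 2 * f) := Real.rpow_def_of_pos two_pos f
    have e4 : 8*c₁ ≤ Real.exp ((c₂ * Real.log 2 - 2) * l) := by
      have : Real.log (8*c₁) ≤ (c₂ * Real.log 2 - 2) * l := by
        rw [div_le_iff₀ hδ] at hl0
        linarith [hl0]
      calc 8*c₁ = Real.exp (Real.log (8*c₁)) := (Real.exp_log (by positivity)).symm
        _ ≤ Real.exp ((c₂ * Real.log 2 - 2) * l) := Real.exp_le_exp.mpr this
    have e5 : Real.exp (Real.log 2 * f) = Real.exp ((c₂ * Real.log 2 - 2) * l) * Real.exp (2*l) := by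
      rw [← Real.exp_add]
      congr 1
      rw [hfdef]
      ring
    have e6 : L^2 = Real.exp (2*l) := by
      rw [hLexp, ← Real.exp_nat_mul]
      norm_num
    have e7 : (0:ℝ) < Real.exp (2*l) := Real.exp_pos _
    calc 8*c₁*L^2 = (8*c₁) * Real.exp (2*l) := by rw [e6]
      _ ≤ Real.exp ((c₂ * Real.log 2 - 2) * l) * Real.exp (2*l) :=
          mul_le_mul_of_nonneg_right e4 e7.le
      _ = Real.exp (Real.log 2 * f) := e5.symm
      _ = (2:ℝ)^(f:ℝ) := e3.symm
      _ ≤ (2:ℝ)^((K:ℕ):ℝ) := e2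
      _ = (2:ℝ)^K := e1.symm
  have hS1 : ∑ p ∈ P1, (q:ℝ)/((p:ℝ)^K) ≤ (q:ℝ)/(8*L) := by
    have h2Kpos : (0:ℝ) < (2:ℝ)^K := by positivity
    have hterm : ∀ p ∈ P1, (q:ℝ)/((p:ℝ)^K) ≤ (q:ℝ)/((2:ℝ)^K) := by
      intro p hp
      have hp2 : 2 ≤ p := (Finset.mem_filter.mp hp).2.two_le
      have hp2R : (2:ℝ) ≤ (p:ℝ) := by exact_mod_cast hp2
      apply div_le_div_of_nonneg_left hq0R h2Kpos
      exact pow_le_pow_left₀ (by norm_num) hp2R K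
    have hc : P1.card ≤ B' := by
      calc P1.card ≤ (Finset.Ioc 1 B').card := Finset.card_le_card (Finset.filter_subset _ _)
        _ = B' - 1 := Nat.card_Ioc _ _
        _ ≤ B' := Nat.sub_le _ _
    calc ∑ p ∈ P1, (q:ℝ)/((p:ℝ)^K) ≤ P1.card • ((q:ℝ)/((2:ℝ)^K)) :=
          Finset.sum_le_card_nsmul _ _ _ hterm
      _ = (P1.card : ℝ) * ((q:ℝ)/((2:ℝ)^K)) := nsmul_eq_mul _ _
      _ ≤ (B':ℝ) * ((q:ℝ)/((2:ℝ)^K)) := by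
          apply mul_le_mul_of_nonneg_right (by exact_mod_cast hc) (by positivity)
      _ ≤ B * ((q:ℝ)/((2:ℝ)^K)) := mul_le_mul_of_nonneg_right hB'le (by positivity)
      _ ≤ (q:ℝ)/(8*L) := by
          rw [mul_div_assoc' B (q:ℝ) _, div_le_div_iff₀ h2Kpos (by positivity)]
          have hkey : (q:ℝ) * (8*c₁*L^2) ≤ (q:ℝ) * (2:ℝ)^K :=
            mul_le_mul_of_nonneg_left h2K hq0R
          rw [hBdef]
          nlinarith [hkey]
  -- bound on the second sum
  have hS2 : ∑ m ∈ F, (q:ℝ)/((m:ℝ)^2) ≤ (q:ℝ)/(8*L) := by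
    have htail := coprime_tail_sum M B' (q-1) hM1 hB'1
    have e1 : ∑ m ∈ F, (q:ℝ)/((m:ℝ)^2) = (q:ℝ) * ∑ m ∈ F, (1:ℝ)/((m:ℝ)^2) := by
      rw [Finset.mul_sum]
      apply Finset.sum_congr rfl
      intro m _
      rw [mul_one_div]
    have e2 : (M.totient : ℝ) * (1/(B':ℝ)^2 + 1/((M:ℝ)*(B':ℝ)))
        ≤ (c₁/32) * (M:ℝ) * (1/(B':ℝ)^2 + 1/((M:ℝ)*(B':ℝ))) := by
      apply mul_le_mul_of_nonneg_right hMtot (by positivity)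
    have e3 : (c₁/32) * (M:ℝ) * (1/(B':ℝ)^2 + 1/((M:ℝ)*(B':ℝ))) ≤ 1/(8*L) := by
      have hMB : (M:ℝ) ≤ (B':ℝ) := by exact_mod_cast hB'M
      have hb0 : (0:ℝ) < (B':ℝ) := by linarith
      have hm0 : (0:ℝ) < (M:ℝ) := by linarith
      have key1 : (M:ℝ) * (1/(B':ℝ)^2 + 1/((M:ℝ)*(B':ℝ))) ≤ 2/(B':ℝ) := by
        have i1 : (M:ℝ) * (1/(B':ℝ)^2) ≤ 1/(B':ℝ) := by
          rw [mul_one_div, div_le_div_iff₀ (by positivity) hb0]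
          nlinarith
        have i2 : (M:ℝ) * (1/((M:ℝ)*(B':ℝ))) = 1/(B':ℝ) := by
          field_simp
        calc (M:ℝ) * (1/(B':ℝ)^2 + 1/((M:ℝ)*(B':ℝ)))
            = (M:ℝ) * (1/(B':ℝ)^2) + (M:ℝ) * (1/((M:ℝ)*(B':ℝ))) := by ring
          _ ≤ 1/(B':ℝ) + 1/(B':ℝ) := by rw [i2]; linarith
          _ = 2/(B':ℝ) := by ring
      have key2 : (c₁/32) * (2/(B':ℝ)) ≤ 1/(8*L) := by
        rw [mul_div_assoc' _ _ _, div_le_div_iff₀ hb0 (by positivity)]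
        -- c₁/32*2 * (8L) ≤ B'  ⟸  c₁ L ≤ 2 B'
        have : c₁ * L ≤ 2 * (B':ℝ) := by
          rw [← hBdef]
          linarith
        nlinarith
      calc (c₁/32) * (M:ℝ) * (1/(B':ℝ)^2 + 1/((M:ℝ)*(B':ℝ)))
          = (c₁/32) * ((M:ℝ) * (1/(B':ℝ)^2 + 1/((M:ℝ)*(B':ℝ)))) := by ring
        _ ≤ (c₁/32) * (2/(B':ℝ)) := by
            apply mul_le_mul_of_nonneg_left key1 (by positivity)
        _ ≤ 1/(8*L) := key2
      -- done
    rw [e1]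
    calc (q:ℝ) * ∑ m ∈ F, (1:ℝ)/((m:ℝ)^2)
        ≤ (q:ℝ) * ((M.totient : ℝ) * (1/(B':ℝ)^2 + 1/((M:ℝ)*(B':ℝ)))) := by
          apply mul_le_mul_of_nonneg_left ?_ hq0R
          exact htail
      _ ≤ (q:ℝ) * (1/(8*L)) := by
          apply mul_le_mul_of_nonneg_left (le_trans e2 e3) hq0R
      _ = (q:ℝ)/(8*L) := by rw [mul_one_div]
  -- 2 is small
  have h16L : 16 * L ≤ (q:ℝ) := by
    have hsq0 : (0:ℝ) < Real.sqrt q := Real.sqrt_pos.mpr (by linarith)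
    have hsq32 : (32:ℝ) ≤ Real.sqrt q := by
      rw [Real.le_sqrt (by norm_num) hq0R]
      norm_num
      linarith
    have hlogq : Real.log q ≤ 2 * Real.sqrt q := by
      have e : Real.log q = 2 * Real.log (Real.sqrt q) := by
        conv_lhs => rw [← Real.sq_sqrt hq0R]
        rw [Real.log_pow]
        push_cast
        ring
      have := Real.log_le_sub_one_of_pos hsq0
      linarith [e]
    have hlogqpos : (1:ℝ) ≤ Real.log q := by
      have : Real.log (Real.exp 1) ≤ Real.log q := by
        apply Real.log_le_log (Real.exp_pos 1)
        calc Real.exp 1 ≤ 3 := by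
              have := Real.exp_one_lt_d9
              norm_num at this ⊢
              linarith
          _ ≤ (q:ℝ) := by linarith
      rw [Real.log_exp] at this
      linarith [this]
    have hLlog : L ≤ Real.log q := by
      rw [hLdef]
      apply Real.log_le_log (by linarith)
      have := Real.log_le_sub_one_of_pos (show (0:ℝ) < q by linarith)
      linarith
    have h32sq : 32 * Real.sqrt q ≤ (q:ℝ) := by
      have := Real.mul_self_sqrt hq0R
      nlinarith
    linarith
  have h2small : (2:ℝ) ≤ (q:ℝ)/(8*L) := by
    rw [le_div_iff₀ (by positivity)]
    linarith
  -- assemble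
  have hScard : (S.card : ℝ) = (q:ℝ) - 2 - (Bad.card : ℝ) := by
    have : S.card + Bad.card = q - 2 := by rw [hsplit, hTcard]
    have hcast : ((S.card + Bad.card : ℕ) : ℝ) = ((q - 2 : ℕ) : ℝ) := by exact_mod_cast this
    push_cast [Nat.cast_sub hq2] at hcast
    linarith
  have habs : |(S.card : ℝ) - (q:ℝ)| = 2 + (Bad.card : ℝ) := by
    rw [hScard]
    rw [show (q:ℝ) - 2 - (Bad.card:ℝ) - (q:ℝ) = -(2 + (Bad.card:ℝ)) by ring, abs_neg]
    apply abs_of_nonneg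
    exact add_nonneg zero_le_two (Nat.cast_nonneg _)
  rw [habs]
  have hql : (0:ℝ) ≤ (q:ℝ)/L := by positivity
  calc (2:ℝ) + (Bad.card : ℝ)
      ≤ (q:ℝ)/(8*L) + ((q:ℝ)/(8*L) + (q:ℝ)/(8*L)) :=
        add_le_add h2small (le_trans hBadR (add_le_add hS1 hS2))
    _ = 3/8 * ((q:ℝ)/L) := by ring
    _ ≤ 1/2 * ((q:ℝ)/L) := by linarith
    _ = 1/2 * (q:ℝ)/L := by ring
end
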